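/- Let K be a field, L₀, L₁, …, Lₙ subrings of K, and set U = ⋂ᵢ Lᵢ and U' = ⋂_{i ≠ k} Lᵢ for some fixed k ≥ 1. Suppose x ∈ U is a unit in each Lᵢ, and suppose that for every v ∈ U' there exists d ∈ ℕ such that v·x^d ∈ L_k. Then U' = U[x⁻¹], where U[x⁻¹] denotes the subring of K generated by U and x⁻¹. -/

import Mathlib

/-- Let `K` be a field, `L₀, …, Lₙ` subrings of `K`, `U = ⋂ᵢ Lᵢ` and
`U' = ⋂_{i ≠ k} Lᵢ` for a fixed `k ≥ 1`. Suppose `x ∈ U` is a unit in each `Lᵢ` and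
that for every `v ∈ U'` there is `d ∈ ℕ` with `v * x ^ d ∈ L_k`. Then
`U' = U[x⁻¹]`, the subring of `K` generated by `U` and `x⁻¹`. -/
theorem starfish_localization {K : Type*} [Field K] {n : ℕ} (L : Fin (n + 1) → Subring K)
    (k : Fin (n + 1)) (hk : k ≠ 0)
    (U : Subring K) (hU : U = ⨅ i, L i)
    (U' : Subring K) (hU' : U' = ⨅ i ∈ {i | i ≠ k}, L i)
    (x : K) (hxU : x ∈ U) (hx0 : x ≠ 0) (hxunit : ∀ i, x⁻¹ ∈ L i)
    (happrox : ∀ v ∈ U', ∃ d : ℕ, v * x ^ d ∈ L k) :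
    (U' : Set K) = (Subring.closure ((U : Set K) ∪ {x⁻¹}) : Set K) := by
  have hUmem : ∀ y, y ∈ U ↔ ∀ i, y ∈ L i := by
    intro y; rw [hU]; simp [Subring.mem_iInf]
  have hU'mem : ∀ y, y ∈ U' ↔ ∀ i, i ≠ k → y ∈ L i := by
    intro y; rw [hU']; simp [Subring.mem_iInf]
  ext v
  simp only [SetLike.mem_coe]
  constructor
  · intro hv
    obtain ⟨d, hd⟩ := happrox v hv
    have hvx : v * x ^ d ∈ U := by
      rw [hUmem]
      intro i
      by_cases hik : i = k
      · exact hik ▸ hd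
      · exact Subring.mul_mem _ ((hU'mem v).1 hv i hik)
          (Subring.pow_mem _ ((hUmem x).1 hxU i) d)
    have : v = (v * x ^ d) * (x⁻¹) ^ d := by
      rw [mul_assoc, ← mul_pow, mul_inv_cancel₀ hx0, one_pow, mul_one]
    rw [this]
    have h1 : v * x ^ d ∈ Subring.closure ((U : Set K) ∪ {x⁻¹}) :=
      Subring.subset_closure (Or.inl hvx)
    have h2 : x⁻¹ ∈ Subring.closure ((U : Set K) ∪ {x⁻¹}) :=
      Subring.subset_closure (Or.inr rfl)
    exact mul_mem h1 (pow_mem h2 d)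
  · intro hv
    have hle : Subring.closure ((U : Set K) ∪ {x⁻¹}) ≤ U' := by
      rw [Subring.closure_le]
      rintro y (hy | hy)
      · exact (hU'mem y).2 fun i _ => (hUmem y).1 hy i
      · rw [Set.mem_singleton_iff] at hy
        exact hy ▸ (hU'mem x⁻¹).2 fun i _ => hxunit i
    exact hle hv
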